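/- Let T be a symmetric fourth-order tensor on ℝ^n. Then the injective norm of T is attained on the diagonal: sup{ |Σ_{i,j,k,l} T_{ijkl} x_i y_j z_k w_l| : x,y,z,w ∈ ℝ^n unit vectors } = sup{ |T(x,x,x,x)| : x ∈ ℝ^n a unit vector }, where T(x,x,x,x) = Σ_{i,j,k,l} T_{ijkl} x_i x_j x_k x_l. -/
import Mathlib


noncomputable section

open scoped BigOperators

/-- A fourth-order tensor is symmetric if it is invariant under all permutations of its
four indices (equivalently, under the adjacent transpositions, which generate `S₄`). -/
def SymmTensor {n : ℕ} (T : Fin n → Fin n → Fin n → Fin n → ℝ) : Prop :=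
  ∀ i j k l, T i j k l = T j i k l ∧ T i j k l = T i k j l ∧ T i j k l = T i j l k

namespace InjAux


variable {n : ℕ}

def q (T : Fin n → Fin n → Fin n → Fin n → ℝ) (x y z w : Fin n → ℝ) : ℝ :=
  ∑ i, ∑ j, ∑ k, ∑ l, T i j k l * x i * y j * z k * w l

def s2 (x : Fin n → ℝ) : ℝ := ∑ i, x i ^ 2

variable (T : Fin n → Fin n → Fin n → Fin n → ℝ)

lemma s2_nonneg (x : Fin n → ℝ) : 0 ≤ s2 x :=
  Finset.sum_nonneg fun i _ => sq_nonneg _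

lemma s2_smul (c : ℝ) (x : Fin n → ℝ) : s2 (c • x) = c ^ 2 * s2 x := by
  simp only [s2, Pi.smul_apply, smul_eq_mul, Finset.mul_sum]
  exact Finset.sum_congr rfl fun i _ => by ring

lemma s2_neg (x : Fin n → ℝ) : s2 (-x) = s2 x := by
  simp [s2]

lemma s2_add_sub (x y : Fin n → ℝ) : s2 (x + y) + s2 (x - y) = 2 * s2 x + 2 * s2 y := by
  simp only [s2, ← Finset.sum_add_distrib, Pi.add_apply, Pi.sub_apply, Finset.mul_sum]
  exact Finset.sum_congr rfl fun i _ => by ring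

lemma s2_eq_zero {x : Fin n → ℝ} (h : s2 x = 0) : x = 0 := by
  funext i
  have := (Finset.sum_eq_zero_iff_of_nonneg (fun j _ => sq_nonneg (x j))).mp h i (Finset.mem_univ i)
  have := pow_eq_zero_iff (n := 2) (by norm_num) |>.mp this
  simpa using this

lemma q_add1 (x x' y z w : Fin n → ℝ) :
    q T (x + x') y z w = q T x y z w + q T x' y z w := by
  simp only [q, Pi.add_apply, mul_add, add_mul, Finset.sum_add_distrib]

lemma q_add2 (x y y' z w : Fin n → ℝ) :
    q T x (y + y') z w = q T x y z w + q T x y' z w := by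
  simp only [q, Pi.add_apply, mul_add, add_mul, Finset.sum_add_distrib]

lemma q_add3 (x y z z' w : Fin n → ℝ) :
    q T x y (z + z') w = q T x y z w + q T x y z' w := by
  simp only [q, Pi.add_apply, mul_add, add_mul, Finset.sum_add_distrib]

lemma q_add4 (x y z w w' : Fin n → ℝ) :
    q T x y z (w + w') = q T x y z w + q T x y z w' := by
  simp only [q, Pi.add_apply, mul_add, add_mul, Finset.sum_add_distrib]

lemma q_sub1 (x x' y z w : Fin n → ℝ) :
    q T (x - x') y z w = q T x y z w - q T x' y z w := by
  simp only [q, Pi.sub_apply, mul_sub, sub_mul, Finset.sum_sub_distrib]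

lemma q_sub2 (x y y' z w : Fin n → ℝ) :
    q T x (y - y') z w = q T x y z w - q T x y' z w := by
  simp only [q, Pi.sub_apply, mul_sub, sub_mul, Finset.sum_sub_distrib]

lemma q_sub3 (x y z z' w : Fin n → ℝ) :
    q T x y (z - z') w = q T x y z w - q T x y z' w := by
  simp only [q, Pi.sub_apply, mul_sub, sub_mul, Finset.sum_sub_distrib]

lemma q_sub4 (x y z w w' : Fin n → ℝ) :
    q T x y z (w - w') = q T x y z w - q T x y z w' := by
  simp only [q, Pi.sub_apply, mul_sub, sub_mul, Finset.sum_sub_distrib]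

lemma q_smul1 (c : ℝ) (x y z w : Fin n → ℝ) :
    q T (c • x) y z w = c * q T x y z w := by
  simp only [q, Finset.mul_sum]
  refine Finset.sum_congr rfl fun i _ => Finset.sum_congr rfl fun j _ =>
    Finset.sum_congr rfl fun k _ => Finset.sum_congr rfl fun l _ => ?_
  simp only [Pi.smul_apply, smul_eq_mul]; ring

lemma q_smul2 (c : ℝ) (x y z w : Fin n → ℝ) :
    q T x (c • y) z w = c * q T x y z w := by
  simp only [q, Finset.mul_sum]
  refine Finset.sum_congr rfl fun i _ => Finset.sum_congr rfl fun j _ =>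
    Finset.sum_congr rfl fun k _ => Finset.sum_congr rfl fun l _ => ?_
  simp only [Pi.smul_apply, smul_eq_mul]; ring

lemma q_smul3 (c : ℝ) (x y z w : Fin n → ℝ) :
    q T x y (c • z) w = c * q T x y z w := by
  simp only [q, Finset.mul_sum]
  refine Finset.sum_congr rfl fun i _ => Finset.sum_congr rfl fun j _ =>
    Finset.sum_congr rfl fun k _ => Finset.sum_congr rfl fun l _ => ?_
  simp only [Pi.smul_apply, smul_eq_mul]; ring

lemma q_smul4 (c : ℝ) (x y z w : Fin n → ℝ) :
    q T x y z (c • w) = c * q T x y z w := by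
  simp only [q, Finset.mul_sum]
  refine Finset.sum_congr rfl fun i _ => Finset.sum_congr rfl fun j _ =>
    Finset.sum_congr rfl fun k _ => Finset.sum_congr rfl fun l _ => ?_
  simp only [Pi.smul_apply, smul_eq_mul]; ring

lemma q_zero1 (y z w : Fin n → ℝ) : q T 0 y z w = 0 := by
  simp [q]

lemma q_zero3 (x y w : Fin n → ℝ) : q T x y 0 w = 0 := by
  simp [q]

lemma q_neg2 (x y z w : Fin n → ℝ) : q T x (-y) z w = - q T x y z w := by
  have h : (-y) = (-1 : ℝ) • y := by funext i; simp
  rw [h, q_smul2]; ring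

lemma q_neg4 (x y z w : Fin n → ℝ) : q T x y z (-w) = - q T x y z w := by
  have h : (-w) = (-1 : ℝ) • w := by funext i; simp
  rw [h, q_smul4]; ring

variable {T}

lemma q_swap12 (hs : SymmTensor T) (x y z w : Fin n → ℝ) :
    q T x y z w = q T y x z w := by
  unfold q
  conv_rhs => rw [Finset.sum_comm]
  refine Finset.sum_congr rfl fun i _ => Finset.sum_congr rfl fun j _ =>
    Finset.sum_congr rfl fun k _ => Finset.sum_congr rfl fun l _ => ?_
  rw [(hs i j k l).1]; ring

lemma q_swap23 (hs : SymmTensor T) (x y z w : Fin n → ℝ) :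
    q T x y z w = q T x z y w := by
  unfold q
  refine Finset.sum_congr rfl fun i _ => ?_
  conv_rhs => rw [Finset.sum_comm]
  refine Finset.sum_congr rfl fun j _ => Finset.sum_congr rfl fun k _ =>
    Finset.sum_congr rfl fun l _ => ?_
  rw [(hs i j k l).2.1]; ring

lemma q_swap34 (hs : SymmTensor T) (x y z w : Fin n → ℝ) :
    q T x y z w = q T x y w z := by
  unfold q
  refine Finset.sum_congr rfl fun i _ => Finset.sum_congr rfl fun j _ => ?_
  conv_rhs => rw [Finset.sum_comm]
  refine Finset.sum_congr rfl fun k _ => Finset.sum_congr rfl fun l _ => ?_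
  rw [(hs i j k l).2.2]; ring

lemma pol12 (hs : SymmTensor T) (x y z w : Fin n → ℝ) :
    q T (x + y) (x + y) z w - q T (x - y) (x - y) z w = 4 * q T x y z w := by
  simp only [q_add1, q_add2, q_sub1, q_sub2]
  rw [q_swap12 hs y x z w]
  ring

lemma pol34 (hs : SymmTensor T) (x y z w : Fin n → ℝ) :
    q T x y (z + w) (z + w) - q T x y (z - w) (z - w) = 4 * q T x y z w := by
  simp only [q_add3, q_add4, q_sub3, q_sub4]
  rw [q_swap34 hs x y w z]
  ring


variable (T)

-- normalization helper
lemma norm_unit {u : Fin n → ℝ} (hu : s2 u ≠ 0) :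
    s2 ((Real.sqrt (s2 u))⁻¹ • u) = 1 ∧ ((Real.sqrt (s2 u))⁻¹) ^ 2 = (s2 u)⁻¹ := by
  have h0 : 0 ≤ s2 u := s2_nonneg u
  have hc2 : ((Real.sqrt (s2 u))⁻¹) ^ 2 = (s2 u)⁻¹ := by
    rw [inv_pow, Real.sq_sqrt h0]
  refine ⟨?_, hc2⟩
  rw [s2_smul, hc2, inv_mul_cancel₀ hu]

lemma bound12 (A : ℝ)
    (hA : ∀ x y z w : Fin n → ℝ, s2 x = 1 → s2 y = 1 → s2 z = 1 → s2 w = 1 →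
      |q T x y z w| ≤ A)
    (u z w : Fin n → ℝ) (hz : s2 z = 1) (hw : s2 w = 1) :
    |q T u u z w| ≤ A * s2 u := by
  rcases eq_or_ne (s2 u) 0 with h0 | h0
  · have h1 : q T u u z w = 0 := by rw [s2_eq_zero h0]; exact q_zero1 T _ _ _
    rw [h1, h0, abs_zero, mul_zero]
  · have hpos : 0 < s2 u := lt_of_le_of_ne (s2_nonneg u) (Ne.symm h0)
    obtain ⟨hs', hc2⟩ := norm_unit h0
    set c := (Real.sqrt (s2 u))⁻¹ with hc
    have h1 := hA _ _ _ _ hs' hs' hz hw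
    have hq : q T (c • u) (c • u) z w = (s2 u)⁻¹ * q T u u z w := by
      rw [q_smul1, q_smul2, ← mul_assoc, ← sq, hc2]
    rw [hq, abs_mul, abs_of_nonneg (inv_nonneg.mpr (le_of_lt hpos))] at h1
    calc |q T u u z w| = s2 u * ((s2 u)⁻¹ * |q T u u z w|) := by field_simp
    _ ≤ s2 u * A := mul_le_mul_of_nonneg_left h1 (le_of_lt hpos)
    _ = A * s2 u := mul_comm _ _

lemma bound34 (A : ℝ)
    (hA : ∀ x y z w : Fin n → ℝ, s2 x = 1 → s2 y = 1 → s2 z = 1 → s2 w = 1 →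
      |q T x y z w| ≤ A)
    (x y u : Fin n → ℝ) (hx : s2 x = 1) (hy : s2 y = 1) :
    |q T x y u u| ≤ A * s2 u := by
  rcases eq_or_ne (s2 u) 0 with h0 | h0
  · have h1 : q T x y u u = 0 := by rw [s2_eq_zero h0]; exact q_zero3 T _ _ _
    rw [h1, h0, abs_zero, mul_zero]
  · have hpos : 0 < s2 u := lt_of_le_of_ne (s2_nonneg u) (Ne.symm h0)
    obtain ⟨hs', hc2⟩ := norm_unit h0
    set c := (Real.sqrt (s2 u))⁻¹ with hc
    have h1 := hA _ _ _ _ hx hy hs' hs'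
    have hq : q T x y (c • u) (c • u) = (s2 u)⁻¹ * q T x y u u := by
      rw [q_smul3, q_smul4, ← mul_assoc, ← sq, hc2]
    rw [hq, abs_mul, abs_of_nonneg (inv_nonneg.mpr (le_of_lt hpos))] at h1
    calc |q T x y u u| = s2 u * ((s2 u)⁻¹ * |q T x y u u|) := by field_simp
    _ ≤ s2 u * A := mul_le_mul_of_nonneg_left h1 (le_of_lt hpos)
    _ = A * s2 u := mul_comm _ _

lemma bound22 (A : ℝ)
    (hA : ∀ x y z w : Fin n → ℝ, s2 x = 1 → s2 y = 1 → s2 z = 1 → s2 w = 1 →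
      |q T x y z w| ≤ A)
    (u v : Fin n → ℝ) :
    |q T u u v v| ≤ A * s2 u * s2 v := by
  rcases eq_or_ne (s2 v) 0 with h0 | h0
  · have h1 : q T u u v v = 0 := by rw [s2_eq_zero h0]; exact q_zero3 T _ _ _
    rw [h1, h0, abs_zero, mul_zero]
  · have hpos : 0 < s2 v := lt_of_le_of_ne (s2_nonneg v) (Ne.symm h0)
    obtain ⟨hs', hc2⟩ := norm_unit h0
    set c := (Real.sqrt (s2 v))⁻¹ with hc
    have h1 := bound12 T A hA u (c • v) (c • v) hs' hs'
    have hq : q T u u (c • v) (c • v) = (s2 v)⁻¹ * q T u u v v := by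
      rw [q_smul3, q_smul4, ← mul_assoc, ← sq, hc2]
    rw [hq, abs_mul, abs_of_nonneg (inv_nonneg.mpr (le_of_lt hpos))] at h1
    calc |q T u u v v| = s2 v * ((s2 v)⁻¹ * |q T u u v v|) := by field_simp
    _ ≤ s2 v * (A * s2 u) := mul_le_mul_of_nonneg_left h1 (le_of_lt hpos)
    _ = A * s2 u * s2 v := by ring

lemma bound_diag (D : ℝ)
    (hD : ∀ x : Fin n → ℝ, s2 x = 1 → |q T x x x x| ≤ D)
    (u : Fin n → ℝ) :
    |q T u u u u| ≤ D * (s2 u) ^ 2 := by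
  rcases eq_or_ne (s2 u) 0 with h0 | h0
  · have h1 : q T u u u u = 0 := by rw [s2_eq_zero h0]; exact q_zero1 T _ _ _
    rw [h1, h0, abs_zero]
    norm_num
  · have hpos : 0 < s2 u := lt_of_le_of_ne (s2_nonneg u) (Ne.symm h0)
    obtain ⟨hs', hc2⟩ := norm_unit h0
    set c := (Real.sqrt (s2 u))⁻¹ with hc
    have h1 := hD _ hs'
    have hq : q T (c • u) (c • u) (c • u) (c • u) = ((s2 u)⁻¹) ^ 2 * q T u u u u := by
      rw [q_smul1, q_smul2, q_smul3, q_smul4, ← hc2]; ring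
    rw [hq, abs_mul, abs_of_nonneg (by positivity : (0:ℝ) ≤ ((s2 u)⁻¹) ^ 2)] at h1
    have h2 : (s2 u) ^ 2 * (((s2 u)⁻¹) ^ 2 * |q T u u u u|) ≤ (s2 u) ^ 2 * D :=
      mul_le_mul_of_nonneg_left h1 (by positivity)
    calc |q T u u u u| = (s2 u) ^ 2 * (((s2 u)⁻¹) ^ 2 * |q T u u u u|) := by field_simp
    _ ≤ (s2 u) ^ 2 * D := h2
    _ = D * (s2 u) ^ 2 := mul_comm _ _


variable {T}

lemma merge12 (hs : SymmTensor T) (A : ℝ)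
    (hA : ∀ x y z w : Fin n → ℝ, s2 x = 1 → s2 y = 1 → s2 z = 1 → s2 w = 1 →
      |q T x y z w| ≤ A)
    {x y z w : Fin n → ℝ} (hx : s2 x = 1) (hy : s2 y = 1) (hz : s2 z = 1) (hw : s2 w = 1)
    (hmax : q T x y z w = A) :
    ∃ u : Fin n → ℝ, s2 u = 1 ∧ |q T u u z w| = A := by
  have hA0 : 0 ≤ A := le_trans (abs_nonneg _) (hA x x z w hx hx hz hw)
  set p := x + y with hp
  set m := x - y with hm
  have hs4 : s2 p + s2 m = 4 := by
    have := s2_add_sub x y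
    rw [hx, hy] at this
    rw [hp, hm, this]; norm_num
  have hbp := abs_le.mp (bound12 T A hA p z w hz hw)
  have hbm := abs_le.mp (bound12 T A hA m z w hz hw)
  have hpol := pol12 hs x y z w
  rw [hmax] at hpol
  have h4 : A * s2 p + A * s2 m = 4 * A := by rw [← mul_add, hs4]; ring
  have he1 : q T p p z w = A * s2 p := by
    rw [← hp, ← hm] at hpol
    linarith [hbp.2, hbm.1]
  have he2 : q T m m z w = -(A * s2 m) := by
    rw [← hp, ← hm] at hpol
    linarith [hbp.2, hbm.1]
  rcases eq_or_ne (s2 p) 0 with h0 | h0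
  · have hm4 : s2 m = 4 := by linarith
    refine ⟨(2:ℝ)⁻¹ • m, ?_, ?_⟩
    · rw [s2_smul, hm4]; norm_num
    · rw [q_smul1, q_smul2, he2, hm4]
      rw [show (2:ℝ)⁻¹ * ((2:ℝ)⁻¹ * -(A * 4)) = -A by ring]
      rw [abs_neg, abs_of_nonneg hA0]
  · have hpos : 0 < s2 p := lt_of_le_of_ne (s2_nonneg p) (Ne.symm h0)
    obtain ⟨hs', hc2⟩ := norm_unit h0
    refine ⟨(Real.sqrt (s2 p))⁻¹ • p, hs', ?_⟩
    rw [q_smul1, q_smul2, ← mul_assoc, ← sq, hc2, he1]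
    rw [show (s2 p)⁻¹ * (A * s2 p) = A by field_simp]
    exact abs_of_nonneg hA0

lemma merge34 (hs : SymmTensor T) (A : ℝ)
    (hA : ∀ x y z w : Fin n → ℝ, s2 x = 1 → s2 y = 1 → s2 z = 1 → s2 w = 1 →
      |q T x y z w| ≤ A)
    {x y z w : Fin n → ℝ} (hx : s2 x = 1) (hy : s2 y = 1) (hz : s2 z = 1) (hw : s2 w = 1)
    (hmax : q T x y z w = A) :
    ∃ u : Fin n → ℝ, s2 u = 1 ∧ |q T x y u u| = A := by
  have hA0 : 0 ≤ A := le_trans (abs_nonneg _) (hA x y z z hx hy hz hz)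
  set p := z + w with hp
  set m := z - w with hm
  have hs4 : s2 p + s2 m = 4 := by
    have := s2_add_sub z w
    rw [hz, hw] at this
    rw [hp, hm, this]; norm_num
  have hbp := abs_le.mp (bound34 T A hA x y p hx hy)
  have hbm := abs_le.mp (bound34 T A hA x y m hx hy)
  have hpol := pol34 hs x y z w
  rw [hmax] at hpol
  have h4 : A * s2 p + A * s2 m = 4 * A := by rw [← mul_add, hs4]; ring
  have he1 : q T x y p p = A * s2 p := by
    rw [← hp, ← hm] at hpol
    linarith [hbp.2, hbm.1]
  have he2 : q T x y m m = -(A * s2 m) := by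
    rw [← hp, ← hm] at hpol
    linarith [hbp.2, hbm.1]
  rcases eq_or_ne (s2 p) 0 with h0 | h0
  · have hm4 : s2 m = 4 := by linarith
    refine ⟨(2:ℝ)⁻¹ • m, ?_, ?_⟩
    · rw [s2_smul, hm4]; norm_num
    · rw [q_smul3, q_smul4, he2, hm4]
      rw [show (2:ℝ)⁻¹ * ((2:ℝ)⁻¹ * -(A * 4)) = -A by ring]
      rw [abs_neg, abs_of_nonneg hA0]
  · have hpos : 0 < s2 p := lt_of_le_of_ne (s2_nonneg p) (Ne.symm h0)
    obtain ⟨hs', hc2⟩ := norm_unit h0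
    refine ⟨(Real.sqrt (s2 p))⁻¹ • p, hs', ?_⟩
    rw [q_smul3, q_smul4, ← mul_assoc, ← sq, hc2, he1]
    rw [show (s2 p)⁻¹ * (A * s2 p) = A by field_simp]
    exact abs_of_nonneg hA0

end InjAux

set_option maxHeartbeats 1000000 in
open InjAux in
theorem injNorm_eq_sup_diagonal (n : ℕ) (T : Fin n → Fin n → Fin n → Fin n → ℝ)
    (hsymm : SymmTensor T) :
    sSup { r : ℝ | ∃ x y z w : Fin n → ℝ,
        (∑ i, x i ^ 2) = 1 ∧ (∑ i, y i ^ 2) = 1 ∧ (∑ i, z i ^ 2) = 1 ∧ (∑ i, w i ^ 2) = 1 ∧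
        r = |∑ i, ∑ j, ∑ k, ∑ l, T i j k l * x i * y j * z k * w l| } =
    sSup { r : ℝ | ∃ x : Fin n → ℝ, (∑ i, x i ^ 2) = 1 ∧
        r = |∑ i, ∑ j, ∑ k, ∑ l, T i j k l * x i * x j * x k * x l| } := by
  classical
  set S1 : Set ℝ := { r : ℝ | ∃ x y z w : Fin n → ℝ,
      (∑ i, x i ^ 2) = 1 ∧ (∑ i, y i ^ 2) = 1 ∧ (∑ i, z i ^ 2) = 1 ∧ (∑ i, w i ^ 2) = 1 ∧
      r = |∑ i, ∑ j, ∑ k, ∑ l, T i j k l * x i * y j * z k * w l| } with hS1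
  set S2 : Set ℝ := { r : ℝ | ∃ x : Fin n → ℝ, (∑ i, x i ^ 2) = 1 ∧
      r = |∑ i, ∑ j, ∑ k, ∑ l, T i j k l * x i * x j * x k * x l| } with hS2
  have hmem1 : ∀ x y z w : Fin n → ℝ, s2 x = 1 → s2 y = 1 → s2 z = 1 → s2 w = 1 →
      |q T x y z w| ∈ S1 := by
    intro x y z w hx hy hz hw
    rw [hS1]
    exact ⟨x, y, z, w, hx, hy, hz, hw, rfl⟩
  have hmem2 : ∀ x : Fin n → ℝ, s2 x = 1 → |q T x x x x| ∈ S2 := by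
    intro x hx
    rw [hS2]
    exact ⟨x, hx, rfl⟩
  rcases Nat.eq_zero_or_pos n with hn | hn
  · have h1 : S1 = ∅ := by
      rw [hS1]
      apply Set.eq_empty_iff_forall_notMem.mpr
      rintro r ⟨x, y, z, w, hx, -⟩
      subst hn
      simpa using hx
    have h2 : S2 = ∅ := by
      rw [hS2]
      apply Set.eq_empty_iff_forall_notMem.mpr
      rintro r ⟨x, hx, -⟩
      subst hn
      simpa using hx
    rw [h1, h2]
  -- main case : n ≥ 1
  have i0 : Fin n := ⟨0, hn⟩
  set e0 : Fin n → ℝ := fun i => if i = i0 then 1 else 0 with he0def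
  have he0 : s2 e0 = 1 := by
    simp [s2, he0def, apply_ite (fun t : ℝ => t ^ 2)]
  -- compactness of the sphere
  have hcont_s2 : Continuous (s2 : (Fin n → ℝ) → ℝ) := by
    unfold s2
    exact continuous_finset_sum _ fun i _ => (continuous_apply i).pow 2
  set Sph : Set (Fin n → ℝ) := {x | s2 x = 1} with hSph
  have hSphC : IsCompact Sph := by
    apply Metric.isCompact_of_isClosed_isBounded
    · exact isClosed_eq hcont_s2 continuous_const
    · apply Bornology.IsBounded.subset (Metric.isBounded_closedBall (x := (0 : Fin n → ℝ)) (r := 1))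
      intro x hx
      simp only [Metric.mem_closedBall, dist_zero_right]
      rw [pi_norm_le_iff_of_nonneg zero_le_one]
      intro i
      have h1 : x i ^ 2 ≤ 1 := by
        have h2 : x i ^ 2 ≤ ∑ j, x j ^ 2 := Finset.single_le_sum
          (fun j _ => sq_nonneg (x j)) (Finset.mem_univ i)
        have h3 : s2 x = 1 := hx
        rw [s2] at h3
        linarith
      rw [Real.norm_eq_abs]
      nlinarith [abs_nonneg (x i), sq_abs (x i)]
  have hK : IsCompact (Sph ×ˢ Sph ×ˢ Sph ×ˢ Sph) := hSphC.prod (hSphC.prod (hSphC.prod hSphC))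
  have hqc : Continuous (fun p : (Fin n → ℝ) × (Fin n → ℝ) × (Fin n → ℝ) × (Fin n → ℝ) =>
      |q T p.1 p.2.1 p.2.2.1 p.2.2.2|) := by
    apply Continuous.abs
    unfold q
    refine continuous_finset_sum _ fun i _ => continuous_finset_sum _ fun j _ =>
      continuous_finset_sum _ fun k _ => continuous_finset_sum _ fun l _ => ?_
    fun_prop
  have himg : S1 = (fun p : (Fin n → ℝ) × (Fin n → ℝ) × (Fin n → ℝ) × (Fin n → ℝ) =>
      |q T p.1 p.2.1 p.2.2.1 p.2.2.2|) '' (Sph ×ˢ Sph ×ˢ Sph ×ˢ Sph) := by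
    rw [hS1]
    ext r
    constructor
    · rintro ⟨x, y, z, w, hx, hy, hz, hw, rfl⟩
      exact ⟨(x, y, z, w), ⟨hx, hy, hz, hw⟩, rfl⟩
    · rintro ⟨⟨x, y, z, w⟩, ⟨hx, hy, hz, hw⟩, rfl⟩
      exact ⟨x, y, z, w, hx, hy, hz, hw, rfl⟩
  have hcomp : IsCompact S1 := by rw [himg]; exact hK.image hqc
  have hbdd1 : BddAbove S1 := hcomp.bddAbove
  have hsub : S2 ⊆ S1 := by
    rw [hS1, hS2]
    rintro r ⟨x, hx, rfl⟩
    exact ⟨x, x, x, x, hx, hx, hx, hx, rfl⟩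
  have hbdd2 : BddAbove S2 := hbdd1.mono hsub
  have hS1ne : S1.Nonempty := ⟨_, hmem1 e0 e0 e0 e0 he0 he0 he0 he0⟩
  have hS2ne : S2.Nonempty := ⟨_, hmem2 e0 he0⟩
  set A := sSup S1 with hAdef
  set D := sSup S2 with hDdef
  have hDA : D ≤ A := csSup_le_csSup hbdd1 hS2ne hsub
  have hA : ∀ x y z w : Fin n → ℝ, s2 x = 1 → s2 y = 1 → s2 z = 1 → s2 w = 1 →
      |q T x y z w| ≤ A := fun x y z w hx hy hz hw =>
    le_csSup hbdd1 (hmem1 x y z w hx hy hz hw)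
  have hD : ∀ x : Fin n → ℝ, s2 x = 1 → |q T x x x x| ≤ D := fun x hx =>
    le_csSup hbdd2 (hmem2 x hx)
  have hAmem : A ∈ S1 := hcomp.sSup_mem hS1ne
  rw [hS1] at hAmem
  obtain ⟨x, y, z, w, hx, hy, hz, hw, hval⟩ := hAmem
  have hval' : A = |q T x y z w| := hval
  have hA0 : 0 ≤ A := hval' ▸ abs_nonneg _
  refine le_antisymm ?_ hDA
  by_contra hcon
  push_neg at hcon
  -- hcon : D < A
  obtain ⟨u, hu, huv⟩ : ∃ u : Fin n → ℝ, s2 u = 1 ∧ |q T u u z w| = A := by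
    rcases (abs_eq hA0).mp hval'.symm with hv | hv
    · exact merge12 hsymm A hA hx hy hz hw hv
    · have hy' : s2 (-y) = 1 := by rw [s2_neg]; exact hy
      have hq' : q T x (-y) z w = A := by rw [q_neg2, hv]; ring
      exact merge12 hsymm A hA hx hy' hz hw hq'
  obtain ⟨t, ht, htv⟩ : ∃ t : Fin n → ℝ, s2 t = 1 ∧ |q T u u t t| = A := by
    rcases (abs_eq hA0).mp huv with hv | hv
    · exact merge34 hsymm A hA hu hu hz hw hv
    · have hw' : s2 (-w) = 1 := by rw [s2_neg]; exact hw
      have hq' : q T u u z (-w) = A := by rw [q_neg4, hv]; ring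
      exact merge34 hsymm A hA hu hu hz hw' hq'
  have htv' : |q T u t u t| = A := by rw [q_swap23 hsymm u t u t]; exact htv
  set p := u + t with hp
  set m := u - t with hm
  have hs4 : s2 p + s2 m = 4 := by
    have h := s2_add_sub u t
    rw [hu, ht] at h
    rw [hp, hm, h]; norm_num
  have i3 : q T p p u t - q T m m u t = 4 * q T u t u t := pol12 hsymm u t u t
  have i1 : q T p p p p - q T p p m m = 4 * q T p p u t := pol34 hsymm p p u t
  have i2 : q T m m p p - q T m m m m = 4 * q T m m u t := pol34 hsymm m m u t
  have b1 := abs_le.mp (bound_diag T D hD p)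
  have b2 := abs_le.mp (bound_diag T D hD m)
  have b3 := abs_le.mp (bound22 T A hA p m)
  have b4 := abs_le.mp (bound22 T A hA m p)
  have h16 : 16 * A ≤ D * (s2 p) ^ 2 + A * s2 p * s2 m + A * s2 m * s2 p + D * (s2 m) ^ 2 := by
    rcases (abs_eq hA0).mp htv' with hv | hv
    · linarith [b1.2, b2.2, b3.1, b4.1]
    · linarith [b1.1, b2.1, b3.2, b4.2]
  have ecomm : A * s2 m * s2 p = A * s2 p * s2 m := by ring
  have e1 : A * s2 p ^ 2 + 2 * (A * s2 p * s2 m) + A * s2 m ^ 2 = 16 * A := by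
    have h : s2 m = 4 - s2 p := by linarith
    rw [h]; ring
  have e2 : A * s2 p ^ 2 + A * s2 m ^ 2 ≤ D * s2 p ^ 2 + D * s2 m ^ 2 := by linarith
  have e3 : 8 ≤ s2 p ^ 2 + s2 m ^ 2 := by nlinarith [sq_nonneg (s2 p - s2 m), hs4]
  nlinarith [e2, e3, hcon]
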